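/- Fix a real number N > 1 and D ∈ (0,π]. If h is a CD(N−1,N) density on [0,D] with ∫_0^D h(t) dt = 1, then h(t) > 0 for every t ∈ (0,D). -/

import Mathlib

open Real Set

/-- `h` is a `CD(N-1,N)` density on `[0,D]`. -/
def IsCDDensity (N D : ℝ) (h : ℝ → ℝ) : Prop :=
  (∀ t ∈ Set.Icc (0:ℝ) D, 0 ≤ h t) ∧
  ∀ t₀ t₁ s : ℝ, 0 ≤ t₀ → t₀ ≤ t₁ → t₁ ≤ D → s ∈ Set.Icc (0:ℝ) 1 →
    Real.sin ((1 - s) * (t₁ - t₀)) * h t₀ ^ (1 / (N - 1))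
      + Real.sin (s * (t₁ - t₀)) * h t₁ ^ (1 / (N - 1))
    ≤ Real.sin (t₁ - t₀) * h ((1 - s) * t₀ + s * t₁) ^ (1 / (N - 1))

/-- A `CD(N-1,N)` density on `[0,D]` integrating to `1` is strictly positive on `(0,D)`. -/
theorem cd_density_pos (N D : ℝ) (hN1 : 1 < N) (hD : D ∈ Set.Ioc (0:ℝ) π)
    (h : ℝ → ℝ) (hcd : IsCDDensity N D h) (hint : (∫ t in (0:ℝ)..D, h t) = 1) :
    ∀ t ∈ Set.Ioo (0:ℝ) D, 0 < h t := by
  intro t ht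
  by_contra hpos
  push_neg at hpos
  have hD0 : (0:ℝ) < D := hD.1
  have hDπ : D ≤ π := hD.2
  have ht0 : h t = 0 := le_antisymm hpos (hcd.1 t ⟨ht.1.le, ht.2.le⟩)
  have hpne : (1 / (N - 1) : ℝ) ≠ 0 := by
    have : (0:ℝ) < N - 1 := by linarith
    positivity
  have hzero : ∀ u ∈ Icc (0:ℝ) D, h u = 0 := by
    intro u hu
    have hrp : h u ^ (1 / (N - 1)) = 0 := by
      rcases le_or_gt u t with hut | htu
      · -- u ≤ t : use t₀ = u, t₁ = D, s = (t-u)/(D-u)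
        have hdu : (0:ℝ) < D - u := by linarith [ht.2]
        set s : ℝ := (t - u) / (D - u) with hs
        have hs0 : 0 ≤ s := div_nonneg (by linarith) hdu.le
        have hs1 : s ≤ 1 := (div_le_one hdu).2 (by linarith [ht.2])
        have key := hcd.2 u D s hu.1 hu.2 le_rfl ⟨hs0, hs1⟩
        have hmid : (1 - s) * u + s * D = t := by
          rw [hs]; field_simp
          ring
        have hc1 : (1 - s) * (D - u) = D - t := by
          rw [hs]; field_simp; ring
        have hc2 : s * (D - u) = t - u := by
          rw [hs]; field_simp
        rw [hmid, hc1, hc2, ht0, Real.zero_rpow hpne, mul_zero] at key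
        have hsin1 : 0 < Real.sin (D - t) :=
          Real.sin_pos_of_pos_of_lt_pi (by linarith [ht.2]) (by linarith [ht.1])
        have hsin2 : 0 ≤ Real.sin (t - u) :=
          Real.sin_nonneg_of_nonneg_of_le_pi (by linarith) (by linarith [ht.2, hu.1])
        have hhD : 0 ≤ h D ^ (1 / (N - 1)) :=
          Real.rpow_nonneg (hcd.1 D ⟨hD0.le, le_rfl⟩) _
        have hhu : 0 ≤ h u ^ (1 / (N - 1)) :=
          Real.rpow_nonneg (hcd.1 u hu) _
        nlinarith [mul_nonneg hsin2 hhD, mul_nonneg hsin1.le hhu]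
      · -- t < u : use t₀ = 0, t₁ = u, s = t/u
        have hu0 : (0:ℝ) < u := lt_trans ht.1 htu
        set s : ℝ := t / u with hs
        have hs0 : 0 ≤ s := div_nonneg ht.1.le hu0.le
        have hs1 : s ≤ 1 := (div_le_one hu0).2 htu.le
        have key := hcd.2 0 u s le_rfl hu0.le hu.2 ⟨hs0, hs1⟩
        have hmid : (1 - s) * 0 + s * u = t := by
          rw [hs]; field_simp; ring
        have hc1 : (1 - s) * (u - 0) = u - t := by
          rw [hs]; field_simp; ring
        have hc2 : s * (u - 0) = t := by
          rw [hs]; field_simp; ring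
        rw [hmid, hc1, hc2, ht0, Real.zero_rpow hpne, mul_zero] at key
        have hsin1 : 0 ≤ Real.sin (u - t) :=
          Real.sin_nonneg_of_nonneg_of_le_pi (by linarith) (by linarith [hu.2, ht.1])
        have hsin2 : 0 < Real.sin t :=
          Real.sin_pos_of_pos_of_lt_pi ht.1 (by linarith [ht.2])
        have hh0 : 0 ≤ h 0 ^ (1 / (N - 1)) :=
          Real.rpow_nonneg (hcd.1 0 ⟨le_rfl, hD0.le⟩) _
        have hhu : 0 ≤ h u ^ (1 / (N - 1)) :=
          Real.rpow_nonneg (hcd.1 u hu) _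
        nlinarith [mul_nonneg hsin1 hh0, mul_nonneg hsin2.le hhu]
    exact ((Real.rpow_eq_zero (hcd.1 u hu) hpne).1 hrp)
  have : (∫ t in (0:ℝ)..D, h t) = 0 := by
    rw [show (∫ t in (0:ℝ)..D, h t) = ∫ t in (0:ℝ)..D, (0:ℝ) from
      intervalIntegral.integral_congr (by
        intro u hu
        rw [Set.uIcc_of_le hD0.le] at hu
        exact hzero u hu)]
    simp
  linarith
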